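/- Let φ_1, …, φ_B ∈ ℝ^d with ‖φ_i‖ ≤ 1 and η > 0 with ηB < 1/3. Define H = ∏_{i=1}^{B}(I − η φ_i φ_iᵀ). Then the matrix inequalities I − 2η(1 + ηB/(1−2ηB)) ∑_{i=1}^B φ_i φ_iᵀ ⪯ HᵀH ⪯ I − 2η(1 − ηB/(1−2ηB)) ∑_{i=1}^B φ_i φ_iᵀ hold in the positive-semidefinite order. -/

import Mathlib

open Matrix

lemma vmv_mulVec {d : ℕ} (v w x : Fin d → ℝ) :
    Matrix.vecMulVec v w *ᵥ x = (w ⬝ᵥ x) • v := by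
  ext i
  simp only [Matrix.mulVec, Matrix.vecMulVec_apply, dotProduct, Pi.smul_apply, smul_eq_mul,
    Finset.sum_mul]
  exact Finset.sum_congr rfl fun k _ => by ring

lemma scalarA (η t r g a b c : ℝ) (hη : 0 < η) (ht : 1 ≤ t) (htr : t * r = 1)
    (hg0 : 0 ≤ g) (hg2 : g ≤ 2*η) (hc : c^2 ≤ 1) :
    g*(1-η*t)*a^2 - g*(a-η*c*b)^2 ≤ 2*η^2*r*b^2 := by
  have ht0 : 0 < t := by linarith
  have hr : r = 1/t := by field_simp; nlinarith
  subst hr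
  rw [show 2*η^2*(1/t)*b^2 = (2*η^2*b^2)/t by ring, le_div_iff₀ ht0]
  nlinarith [mul_nonneg (mul_nonneg hg0 hη.le) (sq_nonneg (t*a - c*b)),
    mul_nonneg (mul_nonneg (mul_nonneg hg0 hη.le) (sq_nonneg b)) (mul_nonneg hη.le ht0.le),
    mul_nonneg (mul_nonneg (sub_nonneg.2 hg2) hη.le) (sq_nonneg b),
    mul_nonneg (mul_nonneg hg0 hη.le) (mul_nonneg (sq_nonneg b) (sub_nonneg.2 hc)),
    sq_nonneg b, sq_nonneg (c*b)]

lemma scalarB (η t r dd DD a b c : ℝ) (hη : 0 < η) (ht : 1 ≤ t) (htr : t * r = 1)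
    (hd0 : 0 ≤ dd) (hdD : dd ≤ DD) (hc : c^2 ≤ 1) :
    dd*(a-η*c*b)^2 - dd*(1+η*t)*a^2 ≤ (η*r + η^2)*DD*b^2 := by
  have ht0 : 0 < t := by linarith
  have hr : r = 1/t := by field_simp; nlinarith
  subst hr
  have hDD : 0 ≤ DD := le_trans hd0 hdD
  rw [show (η*(1/t) + η^2)*DD*b^2 = (η*DD*b^2 + η^2*DD*b^2*t)/t by field_simp,
    le_div_iff₀ ht0]
  nlinarith [mul_nonneg (mul_nonneg hd0 hη.le) (sq_nonneg (t*a + c*b)),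
    mul_nonneg (mul_nonneg (sub_nonneg.2 hdD) hη.le) (sq_nonneg b),
    mul_nonneg (mul_nonneg (mul_nonneg (sub_nonneg.2 hdD) hη.le) (sq_nonneg b)) (mul_nonneg hη.le ht0.le),
    mul_nonneg (mul_nonneg hd0 hη.le) (mul_nonneg (sq_nonneg b) (sub_nonneg.2 hc)),
    mul_nonneg (mul_nonneg (mul_nonneg hd0 hη.le) (mul_nonneg (sq_nonneg b) (sub_nonneg.2 hc))) (mul_nonneg hη.le ht0.le)]

set_option maxHeartbeats 2000000 in
lemma core (d B : ℕ) (η t r DD : ℝ) (hη : 0 < η) (ht : 1 ≤ t) (htr : t * r = 1)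
    (hu1 : η * t ≤ 1) (hDD0 : 0 ≤ DD)
    (ψ : ℕ → Fin d → ℝ) (hψ : ∀ i, ψ i ⬝ᵥ ψ i ≤ 1)
    (hG0 : ∀ i : ℕ, i < B → 0 ≤ 2*η - η^2 - 2*η^2*i*r)
    (hInv : ∀ i : ℕ, i < B → (2*η + (η*r + η^2) * i * DD) * (1+η*t)^(B-1-i) ≤ DD)
    (M : ℕ → Matrix (Fin d) (Fin d) ℝ)
    (hM : ∀ i, M i = 1 - η • Matrix.vecMulVec (ψ i) (ψ i)) :
    ∀ j, j ≤ B → ∀ x : Fin d → ℝ,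
      (x ⬝ᵥ x - ∑ i ∈ Finset.range j,
          (2*η + (η*r + η^2)*i*DD) * (1+η*t)^(j-1-i) * (ψ i ⬝ᵥ x)^2
        ≤ (((List.ofFn fun i : Fin B => M i).take j).prod *ᵥ x) ⬝ᵥ
           (((List.ofFn fun i : Fin B => M i).take j).prod *ᵥ x)) ∧
      ((((List.ofFn fun i : Fin B => M i).take j).prod *ᵥ x) ⬝ᵥ
           (((List.ofFn fun i : Fin B => M i).take j).prod *ᵥ x)
        ≤ x ⬝ᵥ x - ∑ i ∈ Finset.range j,
          (2*η - η^2 - 2*η^2*i*r) * (1-η*t)^(j-1-i) * (ψ i ⬝ᵥ x)^2) := by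
  have ht0 : (0:ℝ) < t := by linarith
  have hu0 : (0:ℝ) ≤ η*t := by positivity
  have hr0 : (0:ℝ) < r := by nlinarith
  have hr1 : r ≤ 1 := by nlinarith
  intro j
  induction j with
  | zero => intro _ x; simp
  | succ j ih =>
    intro hjB x
    have hjB' : j < B := hjB
    have hlen : j < (List.ofFn fun i : Fin B => M i).length := by
      simpa using hjB'
    have hP : ((List.ofFn fun i : Fin B => M i).take (j+1)).prod
        = ((List.ofFn fun i : Fin B => M i).take j).prod * M j := by
      rw [List.prod_take_succ _ _ hlen]
      congr 1
      simp
    set P := ((List.ofFn fun i : Fin B => M i).take j).prod with hPdef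
    set y := x - (η * (ψ j ⬝ᵥ x)) • ψ j with hydef
    have hMx : M j *ᵥ x = y := by
      rw [hM j, Matrix.sub_mulVec, Matrix.one_mulVec, Matrix.smul_mulVec, vmv_mulVec,
        hydef, smul_smul]
    have hQ : (((List.ofFn fun i : Fin B => M i).take (j+1)).prod *ᵥ x) = P *ᵥ y := by
      rw [hP, ← Matrix.mulVec_mulVec, hMx]
    obtain ⟨ihl, ihu⟩ := ih (le_of_lt hjB') y
    rw [hQ]
    have hs1 : ψ j ⬝ᵥ ψ j ≤ 1 := hψ j
    have hs0 : 0 ≤ ψ j ⬝ᵥ ψ j := by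
      unfold dotProduct
      exact Finset.sum_nonneg fun k _ => mul_self_nonneg _
    have hyy : y ⬝ᵥ y = x ⬝ᵥ x - (2*η - η^2*(ψ j ⬝ᵥ ψ j))*(ψ j ⬝ᵥ x)^2 := by
      rw [hydef]
      simp only [dotProduct_sub, sub_dotProduct, dotProduct_smul, smul_dotProduct,
        smul_eq_mul]
      rw [dotProduct_comm (ψ j) x]
      ring
    have hay : ∀ i : ℕ, ψ i ⬝ᵥ y = ψ i ⬝ᵥ x - η*(ψ i ⬝ᵥ ψ j)*(ψ j ⬝ᵥ x) := by
      intro i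
      rw [hydef]
      simp only [dotProduct_sub, dotProduct_smul, smul_eq_mul]
      ring
    have hcs : ∀ i : ℕ, (ψ i ⬝ᵥ ψ j)^2 ≤ 1 := by
      intro i
      have h1 := Finset.sum_mul_sq_le_sq_mul_sq Finset.univ (ψ i) (ψ j)
      have e1 : ψ i ⬝ᵥ ψ j = ∑ k, ψ i k * ψ j k := rfl
      have e2 : ψ i ⬝ᵥ ψ i = ∑ k, (ψ i k)^2 := by
        unfold dotProduct; exact Finset.sum_congr rfl fun k _ => (sq (ψ i k)).symm ▸ by ring
      have e3 : ψ j ⬝ᵥ ψ j = ∑ k, (ψ j k)^2 := by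
        unfold dotProduct; exact Finset.sum_congr rfl fun k _ => by ring
      have hi0 : 0 ≤ ψ i ⬝ᵥ ψ i := by
        unfold dotProduct; exact Finset.sum_nonneg fun k _ => mul_self_nonneg _
      have h1' : (ψ i ⬝ᵥ ψ j)^2 ≤ (ψ i ⬝ᵥ ψ i) * (ψ j ⬝ᵥ ψ j) := by
        rw [e1, e2, e3]; exact h1
      nlinarith [hψ i, hψ j, hi0, hs0, h1']
    constructor
    · -- lower bound
      refine le_trans ?_ ihl
      rw [Finset.sum_range_succ, hyy]
      have hj0 : (j+1)-1-j = 0 := by omega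
      rw [hj0, pow_zero, mul_one]
      have hterm : ∀ i ∈ Finset.range j,
          (2*η + (η*r + η^2)*i*DD) * (1+η*t)^(j-1-i) * (ψ i ⬝ᵥ y)^2
            - (2*η + (η*r + η^2)*i*DD) * (1+η*t)^((j+1)-1-i) * (ψ i ⬝ᵥ x)^2
          ≤ (η*r + η^2)*DD*(ψ j ⬝ᵥ x)^2 := by
        intro i hi
        have hij : i < j := Finset.mem_range.1 hi
        have hexp : (j+1)-1-i = (j-1-i)+1 := by omega
        have hps : (1+η*t)^((j+1)-1-i) = (1+η*t)^(j-1-i) * (1+η*t) := by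
          rw [hexp, pow_succ]
        rw [hps, hay i]
        have hdd0 : 0 ≤ (2*η + (η*r + η^2)*i*DD) * (1+η*t)^(j-1-i) := by
          apply mul_nonneg
          · have : (0:ℝ) ≤ (η*r + η^2)*i*DD :=
              mul_nonneg (mul_nonneg (by nlinarith) (Nat.cast_nonneg i)) hDD0
            linarith
          · positivity
        have hddD : (2*η + (η*r + η^2)*i*DD) * (1+η*t)^(j-1-i) ≤ DD := by
          refine le_trans ?_ (hInv i (lt_trans hij hjB'))
          apply mul_le_mul_of_nonneg_left _ (by
            have : (0:ℝ) ≤ (η*r + η^2)*i*DD :=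
              mul_nonneg (mul_nonneg (by nlinarith) (Nat.cast_nonneg i)) hDD0
            linarith)
          apply pow_le_pow_right₀ (by nlinarith)
          omega
        have h := scalarB η t r ((2*η + (η*r + η^2)*i*DD) * (1+η*t)^(j-1-i)) DD
          (ψ i ⬝ᵥ x) (ψ j ⬝ᵥ x) (ψ i ⬝ᵥ ψ j) hη ht htr hdd0 hddD (hcs i)
        nlinarith [h]
      have hsum := Finset.sum_le_sum hterm
      rw [Finset.sum_sub_distrib, Finset.sum_const, Finset.card_range, nsmul_eq_mul] at hsum
      have hlast : (j:ℝ) * ((η*r + η^2)*DD*(ψ j ⬝ᵥ x)^2)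
          ≤ (2*η + (η*r + η^2)*j*DD) * (ψ j ⬝ᵥ x)^2 - (2*η - η^2*(ψ j ⬝ᵥ ψ j))*(ψ j ⬝ᵥ x)^2 := by
        nlinarith [mul_nonneg (mul_nonneg (sq_nonneg η) hs0) (sq_nonneg (ψ j ⬝ᵥ x))]
      linarith
    · -- upper bound
      refine le_trans ihu ?_
      rw [Finset.sum_range_succ, hyy]
      have hj0 : (j+1)-1-j = 0 := by omega
      rw [hj0, pow_zero, mul_one]
      have hterm : ∀ i ∈ Finset.range j,
          (2*η - η^2 - 2*η^2*i*r) * (1-η*t)^((j+1)-1-i) * (ψ i ⬝ᵥ x)^2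
            - (2*η - η^2 - 2*η^2*i*r) * (1-η*t)^(j-1-i) * (ψ i ⬝ᵥ y)^2
          ≤ 2*η^2*r*(ψ j ⬝ᵥ x)^2 := by
        intro i hi
        have hij : i < j := Finset.mem_range.1 hi
        have hexp : (j+1)-1-i = (j-1-i)+1 := by omega
        have hps : (1-η*t)^((j+1)-1-i) = (1-η*t)^(j-1-i) * (1-η*t) := by
          rw [hexp, pow_succ]
        rw [hps, hay i]
        have hg0 : 0 ≤ (2*η - η^2 - 2*η^2*i*r) * (1-η*t)^(j-1-i) :=
          mul_nonneg (hG0 i (lt_trans hij hjB')) (pow_nonneg (by linarith) _)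
        have hg2 : (2*η - η^2 - 2*η^2*i*r) * (1-η*t)^(j-1-i) ≤ 2*η := by
          have h1 : (2*η - η^2 - 2*η^2*i*r) ≤ 2*η := by
            have : (0:ℝ) ≤ η^2 + 2*η^2*i*r :=
              by positivity
            linarith
          have h2 : (1-η*t)^(j-1-i) ≤ 1 :=
            pow_le_one₀ (by linarith) (by linarith)
          nlinarith [hG0 i (lt_trans hij hjB'), pow_nonneg (show (0:ℝ) ≤ 1-η*t by linarith) (j-1-i)]
        have h := scalarA η t r ((2*η - η^2 - 2*η^2*i*r) * (1-η*t)^(j-1-i))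
          (ψ i ⬝ᵥ x) (ψ j ⬝ᵥ x) (ψ i ⬝ᵥ ψ j) hη ht htr hg0 hg2 (hcs i)
        nlinarith [h]
      have hsum := Finset.sum_le_sum hterm
      rw [Finset.sum_sub_distrib, Finset.sum_const, Finset.card_range, nsmul_eq_mul] at hsum
      have hlast : (j:ℝ) * (2*η^2*r*(ψ j ⬝ᵥ x)^2)
          ≤ (2*η - η^2*(ψ j ⬝ᵥ ψ j))*(ψ j ⬝ᵥ x)^2 - (2*η - η^2 - 2*η^2*j*r)*(ψ j ⬝ᵥ x)^2 := by
        nlinarith [mul_nonneg (mul_nonneg (sq_nonneg η) (sub_nonneg.2 hs1)) (sq_nonneg (ψ j ⬝ᵥ x))]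
      linarith

set_option maxHeartbeats 800000 in
lemma factU (B i : ℕ) (η : ℝ) (hη : 0 < η) (hB : 0 < B) (hiB : i < B) (hηB : η*B < 1/3) :
    2*η*(1 - η*B/(1-2*(η*B))) ≤ (2*η - η^2 - 2*η^2*i*(1-η*B)) * (1-η*(1/(1-η*B)))^(B-1-i) := by
  have hB1 : (1:ℝ) ≤ B := by exact_mod_cast hB
  set τ := η * (B:ℝ) with hτdef
  have hτ0 : 0 < τ := mul_pos hη (by linarith)
  have hτ : τ < 1/3 := hηB
  have hd1 : (0:ℝ) < 1 - τ := by linarith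
  have hd2 : (0:ℝ) < 1 - 2*τ := by linarith
  have hητ : η ≤ τ := by nlinarith
  set t := 1/(1-τ) with htdef
  have htd : t*(1-τ) = 1 := by rw [htdef]; field_simp
  have ht1 : 1 ≤ t := by rw [htdef, le_div_iff₀ hd1]; linarith
  have ht32 : t ≤ 3/2 := by rw [htdef, div_le_iff₀ hd1]; linarith
  have ht0 : (0:ℝ) < t := by linarith
  set ε := τ/(1-2*τ) with hεdef
  have hεd : ε*(1-2*τ) = τ := by rw [hεdef]; field_simp; exact div_self (ne_of_gt (by linarith))
  have hε0 : 0 ≤ ε := by positivity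
  set k := B - 1 - i with hkdef
  have hik : (i:ℝ) + (k:ℝ) = (B:ℝ) - 1 := by
    have h : i + k + 1 = B := by omega
    have := congrArg (Nat.cast (R := ℝ)) h
    push_cast at this
    linarith
  have hk0 : (0:ℝ) ≤ (k:ℝ) := Nat.cast_nonneg k
  have hi0 : (0:ℝ) ≤ (i:ℝ) := Nat.cast_nonneg i
  have hi' : (i:ℝ) ≤ (B:ℝ) - 1 := by linarith
  have hu0 : (0:ℝ) ≤ η*t := by positivity
  have hηt : η ≤ η*t := by nlinarith [mul_nonneg hη.le (sub_nonneg.2 ht1)]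
  have hτt : τ*t ≤ 1/2 := by
    have q1 : τ*t ≤ (1/3)*t := mul_le_mul_of_nonneg_right (le_of_lt hτ) ht0.le
    linarith
  have hηtτt : η*t ≤ τ*t := mul_le_mul_of_nonneg_right hητ ht0.le
  have hbern : 1 - (k:ℝ)*(η*t) ≤ (1-η*t)^k := by
    have h := one_add_mul_le_pow (a := -(η*t)) (by linarith) k
    rw [show (1:ℝ) + -(η*t) = 1-η*t from by ring] at h
    linarith
  have hηi : η*(i:ℝ) ≤ τ - η := by nlinarith
  have hx1 : η^2*(i:ℝ)*(1-τ) ≤ η*(τ-η) := by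
    nlinarith [mul_le_mul_of_nonneg_left hηi (mul_nonneg hη.le hd1.le),
      mul_nonneg (mul_nonneg hη.le (by linarith : (0:ℝ) ≤ τ-η)) hτ0.le]
  have hx0 : (0:ℝ) ≤ η^2*(i:ℝ)*(1-τ) := by positivity
  have hA0 : 0 ≤ 2*η - η^2 - 2*η^2*(i:ℝ)*(1-τ) := by
    nlinarith [hx1, mul_le_mul_of_nonneg_left hτ.le hη.le]
  have hA2 : 2*η - η^2 - 2*η^2*(i:ℝ)*(1-τ) ≤ 2*η := by linarith [hx0, sq_nonneg η]
  have h3 : τ*t ≤ ε := by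
    rw [hεdef, le_div_iff₀ hd2]
    have e2 : τ*(t*(1-τ)) = τ := by rw [htd, mul_one]
    nlinarith [mul_nonneg (mul_nonneg hτ0.le hτ0.le) ht0.le]
  have h2 : η/2 + η*(i:ℝ)*(1-τ) + (k:ℝ)*(η*t) ≤ τ*t := by
    have p1 : η*(i:ℝ)*(1-τ) ≤ η*t*(i:ℝ) := by
      nlinarith [mul_nonneg (mul_nonneg hη.le hi0) (show (0:ℝ) ≤ t-(1-τ) by linarith)]
    have p2 : η*t*(i:ℝ) + (k:ℝ)*(η*t) = η*t*((B:ℝ)-1) := by rw [← hik]; ring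
    have p3 : η*t*((B:ℝ)-1) = τ*t - η*t := by rw [hτdef]; ring
    linarith
  have key : 2*η*(1-ε) ≤ (2*η - η^2 - 2*η^2*(i:ℝ)*(1-τ)) * (1 - (k:ℝ)*(η*t)) := by
    have h6 := mul_le_mul_of_nonneg_left (h2.trans h3) (by linarith : (0:ℝ) ≤ 2*η)
    have h7 := mul_le_mul_of_nonneg_right hA2 (mul_nonneg hk0 hu0)
    nlinarith [h6, h7]
  calc 2*η*(1 - ε) ≤ (2*η - η^2 - 2*η^2*(i:ℝ)*(1-τ)) * (1 - (k:ℝ)*(η*t)) := key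
    _ ≤ (2*η - η^2 - 2*η^2*(i:ℝ)*(1-τ)) * (1-η*t)^k :=
        mul_le_mul_of_nonneg_left hbern hA0

set_option maxHeartbeats 800000 in
lemma factL (B i : ℕ) (η : ℝ) (hη : 0 < η) (hB : 0 < B) (hiB : i < B) (hηB : η*B < 1/3) :
    (2*η + (η*(1-η*B) + η^2)*i*(2*η*(1+η*B/(1-2*(η*B))))) * (1+η*(1/(1-η*B)))^(B-1-i)
      ≤ 2*η*(1+η*B/(1-2*(η*B))) := by
  have hB1 : (1:ℝ) ≤ B := by exact_mod_cast hB
  set τ := η * (B:ℝ) with hτdef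
  have hτ0 : 0 < τ := mul_pos hη (by linarith)
  have hτ : τ < 1/3 := hηB
  have hd1 : (0:ℝ) < 1 - τ := by linarith
  have hd2 : (0:ℝ) < 1 - 2*τ := by linarith
  have hητ : η ≤ τ := by nlinarith
  set t := 1/(1-τ) with htdef
  have htd : t*(1-τ) = 1 := by rw [htdef]; field_simp
  have ht1 : 1 ≤ t := by rw [htdef, le_div_iff₀ hd1]; linarith
  have ht32 : t ≤ 3/2 := by rw [htdef, div_le_iff₀ hd1]; linarith
  have ht0 : (0:ℝ) < t := by linarith
  set ε := τ/(1-2*τ) with hεdef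
  have hεd : ε*(1-2*τ) = τ := by rw [hεdef]; field_simp; exact div_self (ne_of_gt (by linarith))
  have hε0 : 0 ≤ ε := by positivity
  set k := B - 1 - i with hkdef
  have hik : (i:ℝ) + (k:ℝ) = (B:ℝ) - 1 := by
    have h : i + k + 1 = B := by omega
    have := congrArg (Nat.cast (R := ℝ)) h
    push_cast at this
    linarith
  have hk0 : (0:ℝ) ≤ (k:ℝ) := Nat.cast_nonneg k
  have hi0 : (0:ℝ) ≤ (i:ℝ) := Nat.cast_nonneg i
  have hi' : (i:ℝ) ≤ (B:ℝ) - 1 := by linarith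
  have hu0 : (0:ℝ) ≤ η*t := by positivity
  have hτt : τ*t ≤ 1/2 := by
    have q1 : τ*t ≤ (1/3)*t := mul_le_mul_of_nonneg_right (le_of_lt hτ) ht0.le
    linarith
  have hηt : η ≤ η*t := by nlinarith
  have hηtτt : η*t ≤ τ*t := mul_le_mul_of_nonneg_right hητ ht0.le
  have hku : (k:ℝ)*(η*t) ≤ 1/2 := by
    have q2 : (k:ℝ)*(η*t) ≤ ((B:ℝ)-1)*(η*t) :=
      mul_le_mul_of_nonneg_right (by linarith) hu0
    have q3 : ((B:ℝ)-1)*(η*t) = τ*t - η*t := by rw [hτdef]; ring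
    linarith
  have hbern : 1 - (k:ℝ)*(η*t) ≤ (1-η*t)^k := by
    have h := one_add_mul_le_pow (a := -(η*t)) (by linarith) k
    rw [show (1:ℝ) + -(η*t) = 1-η*t from by ring] at h
    linarith
  have hbpos : (0:ℝ) < 1 - (k:ℝ)*(η*t) := by linarith
  have hppos : (0:ℝ) < (1-η*t)^k := lt_of_lt_of_le hbpos hbern
  have hut : η*t ≤ 1/2 := by linarith
  have hpow : (1+η*t)^k ≤ 1/(1 - (k:ℝ)*(η*t)) := by
    have h1 : (1+η*t) ≤ 1/(1-η*t) := by
      rw [le_div_iff₀ (by linarith : (0:ℝ) < 1-η*t)]; nlinarith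
    have h2 : (1+η*t)^k ≤ (1/(1-η*t))^k := pow_le_pow_left₀ (by linarith) h1 k
    have h3 : (1/(1-η*t))^k = 1/(1-η*t)^k := by rw [one_div, one_div, inv_pow]
    have h4 : 1/(1-η*t)^k ≤ 1/(1 - (k:ℝ)*(η*t)) :=
      one_div_le_one_div_of_le hbpos hbern
    linarith
  have hDD0 : (0:ℝ) ≤ 2*η*(1+ε) := by positivity
  have hq1 : (1-τ+η) ≤ t := by
    have q1 : (1-τ+η)*(1-τ) ≤ 1 := by nlinarith
    have q2 : (1-τ+η)*(1-τ) ≤ t*(1-τ) := by rw [htd]; linarith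
    exact le_of_mul_le_mul_right q2 hd1
  have e1 : (1+ε)*(1-2*τ) = 1-τ := by nlinarith [hεd]
  have h5 : (1+ε)*(τ*t) = ε := by
    have e2 : ((1+ε)*(τ*t))*(1-2*τ) = ε*(1-2*τ) := by
      calc ((1+ε)*(τ*t))*(1-2*τ) = ((1+ε)*(1-2*τ))*(τ*t) := by ring
        _ = (1-τ)*(τ*t) := by rw [e1]
        _ = τ*(t*(1-τ)) := by ring
        _ = τ := by rw [htd, mul_one]
        _ = ε*(1-2*τ) := hεd.symm
    exact mul_right_cancel₀ (ne_of_gt hd2) e2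
  have hDD' : 0 ≤ 2*η + (η*(1-τ) + η^2)*(i:ℝ)*(2*η*(1+ε)) := by
    have : (0:ℝ) ≤ (η*(1-τ) + η^2)*(i:ℝ)*(2*η*(1+ε)) :=
      mul_nonneg (mul_nonneg (by nlinarith) hi0) hDD0
    linarith
  have hmain : 2*η + (η*(1-τ) + η^2)*(i:ℝ)*(2*η*(1+ε)) ≤ (2*η*(1+ε)) * (1 - (k:ℝ)*(η*t)) := by
    have hq : η*(1-τ+η)*(i:ℝ) + (k:ℝ)*(η*t) ≤ τ*t - η*t := by
      have p1 : η*(1-τ+η)*(i:ℝ) ≤ η*t*(i:ℝ) := by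
        nlinarith [mul_nonneg (mul_nonneg hη.le hi0) (show (0:ℝ) ≤ t-(1-τ+η) by linarith)]
      have p2 : η*t*(i:ℝ) + (k:ℝ)*(η*t) = η*t*((B:ℝ)-1) := by rw [← hik]; ring
      have p3 : η*t*((B:ℝ)-1) = τ*t - η*t := by rw [hτdef]; ring
      linarith
    have m1 := mul_le_mul_of_nonneg_left hq (by linarith : (0:ℝ) ≤ 2*η*(1+ε))
    have m2 : 2*η*((1+ε)*(τ*t)) = 2*η*ε := by rw [h5]
    nlinarith [mul_nonneg (mul_nonneg (by linarith : (0:ℝ) ≤ 1+ε) hη.le)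
      (mul_nonneg hη.le ht0.le)]
  calc (2*η + (η*(1-τ) + η^2)*(i:ℝ)*(2*η*(1+ε))) * (1+η*t)^k
      ≤ (2*η + (η*(1-τ) + η^2)*(i:ℝ)*(2*η*(1+ε))) * (1/(1 - (k:ℝ)*(η*t))) :=
        mul_le_mul_of_nonneg_left hpow hDD'
    _ ≤ 2*η*(1+ε) := by
        rw [mul_one_div, div_le_iff₀ hbpos]
        linarith
lemma quadS {d B : ℕ} (φ : Fin B → Fin d → ℝ) (x : Fin d → ℝ) :
    x ⬝ᵥ ((∑ i, Matrix.vecMulVec (φ i) (φ i)) *ᵥ x) = ∑ i, (φ i ⬝ᵥ x)^2 := by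
  have h1 : (∑ i, Matrix.vecMulVec (φ i) (φ i)) *ᵥ x = ∑ i, (φ i ⬝ᵥ x) • φ i := by
    ext j
    simp only [Matrix.mulVec, dotProduct, Finset.sum_apply, Matrix.sum_apply,
      Matrix.vecMulVec_apply, Pi.smul_apply, smul_eq_mul, Finset.sum_mul, Finset.mul_sum]
    rw [Finset.sum_comm]
    refine Finset.sum_congr rfl fun i _ => Finset.sum_congr rfl fun k _ => by ring
  rw [h1]
  simp only [dotProduct, Finset.sum_apply, Pi.smul_apply, smul_eq_mul, Finset.mul_sum]
  rw [Finset.sum_comm]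
  refine Finset.sum_congr rfl fun i _ => ?_
  have e : ∑ k, x k * ((∑ l, φ i l * x l) * φ i k) = (∑ l, φ i l * x l) * ∑ k, φ i k * x k := by
    rw [Finset.mul_sum]
    exact Finset.sum_congr rfl fun k _ => by ring
  rw [e]
  ring
lemma factG0 (B i : ℕ) (η : ℝ) (hη : 0 < η) (hB : 0 < B) (hiB : i < B) (hηB : η*B < 1/3) :
    0 ≤ 2*η - η^2 - 2*η^2*i*(1-η*B) := by
  have hB1 : (1:ℝ) ≤ B := by exact_mod_cast hB
  have hi1 : (i:ℝ) + 1 ≤ B := by exact_mod_cast hiB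
  have hτ0 : (0:ℝ) < η*B := mul_pos hη (by linarith)
  have hd1 : (0:ℝ) < 1 - η*B := by linarith
  have hi0 : (0:ℝ) ≤ (i:ℝ) := Nat.cast_nonneg i
  have hητ : η ≤ η*B := by nlinarith
  have hηi : η*(i:ℝ) ≤ η*B - η := by nlinarith
  have hx1 : η^2*(i:ℝ)*(1-η*B) ≤ η*(η*B-η) := by
    nlinarith [mul_le_mul_of_nonneg_left hηi (mul_nonneg hη.le hd1.le),
      mul_nonneg (mul_nonneg hη.le (by linarith : (0:ℝ) ≤ η*B-η)) hτ0.le]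
  nlinarith [hx1, mul_le_mul_of_nonneg_left hηB.le hη.le]

set_option maxHeartbeats 1000000 in
theorem product_contraction_psd_bounds (d B : ℕ) (hd : 0 < d) (hB : 0 < B)
    (η : ℝ) (hη : 0 < η) (hηB : η * B < 1 / 3)
    (φ : Fin B → Fin d → ℝ) (hφ : ∀ i, ∑ k, φ i k ^ 2 ≤ 1)
    (H : Matrix (Fin d) (Fin d) ℝ)
    (hH : H = (List.ofFn (fun i : Fin B =>
      (1 : Matrix (Fin d) (Fin d) ℝ) - η • Matrix.vecMulVec (φ i) (φ i))).prod)
    (S : Matrix (Fin d) (Fin d) ℝ)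
    (hS : S = ∑ i, Matrix.vecMulVec (φ i) (φ i)) :
    (Hᵀ * H - (1 - (2 * η * (1 + η * B / (1 - 2 * η * B))) • S)).PosSemidef ∧
      ((1 - (2 * η * (1 - η * B / (1 - 2 * η * B))) • S) - Hᵀ * H).PosSemidef := by
  classical
  have hB1 : (1:ℝ) ≤ B := by exact_mod_cast hB
  have hτ0 : (0:ℝ) < η*B := mul_pos hη (by linarith)
  have hd1 : (0:ℝ) < 1 - η*(B:ℝ) := by linarith
  have hd2 : (0:ℝ) < 1 - 2*(η*(B:ℝ)) := by linarith
  set ψ : ℕ → Fin d → ℝ := fun n => if h : n < B then φ ⟨n, h⟩ else 0 with hψdef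
  set Mf : ℕ → Matrix (Fin d) (Fin d) ℝ :=
    fun n => 1 - η • Matrix.vecMulVec (ψ n) (ψ n) with hMdef
  have hψφ : ∀ i : Fin B, ψ (i:ℕ) = φ i := fun i => by
    simp only [hψdef, i.isLt, dif_pos]
  have hHP : H = ((List.ofFn fun i : Fin B => Mf (i:ℕ)).take B).prod := by
    rw [List.take_of_length_le (by simp), hH]
    refine congrArg List.prod (congrArg List.ofFn (funext fun i => ?_))
    simp only [hMdef]
    rw [hψφ i]
  have hdot : ∀ n, ψ n ⬝ᵥ ψ n ≤ 1 := by
    intro n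
    by_cases h : n < B
    · have e : ψ n ⬝ᵥ ψ n = ∑ k, φ ⟨n, h⟩ k ^ 2 := by
        simp only [hψdef, dif_pos h, dotProduct]
        exact Finset.sum_congr rfl fun k _ => by ring
      rw [e]; exact hφ _
    · simp [hψdef, h, dotProduct]
  have ht : (1:ℝ) ≤ 1/(1-η*(B:ℝ)) := by rw [le_div_iff₀ hd1]; linarith
  have htr : (1/(1-η*(B:ℝ)))*(1-η*(B:ℝ)) = 1 := by field_simp
  have hu1 : η*(1/(1-η*(B:ℝ))) ≤ 1 := by
    rw [mul_one_div, div_le_iff₀ hd1]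
    nlinarith
  have hDD0 : (0:ℝ) ≤ 2*η*(1+η*(B:ℝ)/(1-2*(η*(B:ℝ)))) := by
    have h0 : (0:ℝ) ≤ η*(B:ℝ)/(1-2*(η*(B:ℝ))) := div_nonneg hτ0.le hd2.le
    nlinarith
  have hcore := core d B η (1/(1-η*(B:ℝ))) (1-η*(B:ℝ))
    (2*η*(1+η*(B:ℝ)/(1-2*(η*(B:ℝ))))) hη ht htr hu1 hDD0 ψ hdot
    (fun i hi => factG0 B i η hη hB hi hηB)
    (fun i hi => factL B i η hη hB hi hηB)
    Mf (fun i => rfl) B le_rfl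
  have hxSx : ∀ x : Fin d → ℝ, x ⬝ᵥ (S *ᵥ x) = ∑ i ∈ Finset.range B, (ψ i ⬝ᵥ x)^2 := by
    intro x
    rw [hS, quadS]
    calc ∑ i : Fin B, (φ i ⬝ᵥ x)^2
        = ∑ i : Fin B, (ψ (i:ℕ) ⬝ᵥ x)^2 :=
          Finset.sum_congr rfl fun i _ => by rw [hψφ i]
      _ = ∑ i ∈ Finset.range B, (ψ i ⬝ᵥ x)^2 :=
          Fin.sum_univ_eq_sum_range (fun n => (ψ n ⬝ᵥ x)^2) B
  have hxHx : ∀ x : Fin d → ℝ, x ⬝ᵥ ((Hᵀ*H) *ᵥ x)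
      = (((List.ofFn fun i : Fin B => Mf (i:ℕ)).take B).prod *ᵥ x) ⬝ᵥ
        (((List.ofFn fun i : Fin B => Mf (i:ℕ)).take B).prod *ᵥ x) := by
    intro x
    rw [← Matrix.mulVec_mulVec, Matrix.dotProduct_mulVec, Matrix.vecMul_transpose, hHP]
  have hSx0 : ∀ x : Fin d → ℝ, 0 ≤ x ⬝ᵥ (S *ᵥ x) := by
    intro x
    rw [hxSx x]
    exact Finset.sum_nonneg fun i _ => sq_nonneg _
  -- quadratic bounds
  have hQlo : ∀ x : Fin d → ℝ,
      x ⬝ᵥ x - (2*η*(1 + η*(B:ℝ)/(1-2*η*(B:ℝ)))) * (x ⬝ᵥ (S *ᵥ x)) ≤ x ⬝ᵥ ((Hᵀ*H) *ᵥ x) := by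
    intro x
    obtain ⟨hl, -⟩ := hcore x
    rw [hxHx x, hxSx x]
    have hsum : ∑ i ∈ Finset.range B,
        (2*η + (η*(1-η*(B:ℝ)) + η^2)*(i:ℝ)*(2*η*(1+η*(B:ℝ)/(1-2*(η*(B:ℝ))))))
          * (1+η*(1/(1-η*(B:ℝ))))^(B-1-i) * (ψ i ⬝ᵥ x)^2
        ≤ ∑ i ∈ Finset.range B,
          (2*η*(1+η*(B:ℝ)/(1-2*(η*(B:ℝ))))) * (ψ i ⬝ᵥ x)^2 :=
      Finset.sum_le_sum fun i hi => mul_le_mul_of_nonneg_right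
        (factL B i η hη hB (Finset.mem_range.1 hi) hηB) (sq_nonneg _)
    rw [← Finset.mul_sum] at hsum
    have hcc' : (2*η*(1+η*(B:ℝ)/(1-2*(η*(B:ℝ))))) * (∑ i ∈ Finset.range B, (ψ i ⬝ᵥ x)^2)
        = (2*η*(1 + η*(B:ℝ)/(1-2*η*(B:ℝ)))) * (∑ i ∈ Finset.range B, (ψ i ⬝ᵥ x)^2) := by
      ring_nf
    linarith [hcc']
  have hQup : ∀ x : Fin d → ℝ,
      x ⬝ᵥ ((Hᵀ*H) *ᵥ x) ≤ x ⬝ᵥ x - (2*η*(1 - η*(B:ℝ)/(1-2*η*(B:ℝ)))) * (x ⬝ᵥ (S *ᵥ x)) := by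
    intro x
    obtain ⟨-, hu⟩ := hcore x
    rw [hxHx x, hxSx x]
    have hsum : ∑ i ∈ Finset.range B,
          (2*η*(1 - η*(B:ℝ)/(1-2*(η*(B:ℝ))))) * (ψ i ⬝ᵥ x)^2
        ≤ ∑ i ∈ Finset.range B,
          (2*η - η^2 - 2*η^2*(i:ℝ)*(1-η*(B:ℝ))) * (1-η*(1/(1-η*(B:ℝ))))^(B-1-i) * (ψ i ⬝ᵥ x)^2 :=
      Finset.sum_le_sum fun i hi => mul_le_mul_of_nonneg_right
        (factU B i η hη hB (Finset.mem_range.1 hi) hηB) (sq_nonneg _)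
    rw [← Finset.mul_sum] at hsum
    have hcc' : (2*η*(1-η*(B:ℝ)/(1-2*(η*(B:ℝ))))) * (∑ i ∈ Finset.range B, (ψ i ⬝ᵥ x)^2)
        = (2*η*(1 - η*(B:ℝ)/(1-2*η*(B:ℝ)))) * (∑ i ∈ Finset.range B, (ψ i ⬝ᵥ x)^2) := by
      ring_nf
    linarith [hcc']
  -- hermitian facts
  have hST : Sᵀ = S := by
    rw [hS, Matrix.transpose_sum]
    refine Finset.sum_congr rfl fun i _ => ?_
    ext a b
    simp [Matrix.transpose_apply, Matrix.vecMulVec_apply, mul_comm]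
  have hHT : (Hᵀ*H)ᵀ = Hᵀ*H := by
    rw [Matrix.transpose_mul, Matrix.transpose_transpose]
  constructor
  · refine posSemidef_iff_dotProduct_mulVec.mpr ⟨?_, fun x => ?_⟩
    · show _ᴴ = _
      rw [Matrix.conjTranspose_eq_transpose_of_trivial, Matrix.transpose_sub, hHT,
        Matrix.transpose_sub, Matrix.transpose_smul, hST, Matrix.transpose_one]
    · rw [star_trivial, Matrix.sub_mulVec, Matrix.sub_mulVec, Matrix.one_mulVec,
        Matrix.smul_mulVec, dotProduct_sub, dotProduct_sub, dotProduct_smul,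
        smul_eq_mul]
      have := hQlo x
      linarith
  · refine posSemidef_iff_dotProduct_mulVec.mpr ⟨?_, fun x => ?_⟩
    · show _ᴴ = _
      rw [Matrix.conjTranspose_eq_transpose_of_trivial, Matrix.transpose_sub, hHT,
        Matrix.transpose_sub, Matrix.transpose_smul, hST, Matrix.transpose_one]
    · rw [star_trivial, Matrix.sub_mulVec, Matrix.sub_mulVec, Matrix.one_mulVec,
        Matrix.smul_mulVec, dotProduct_sub, dotProduct_sub, dotProduct_smul,
        smul_eq_mul]
      have := hQup x
      linarith
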